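/- Let n = d₁d₂ with integers d₁, d₂ > 1, and let A = {u + v·d₁d₂ : 0 ≤ u ≤ d₁−1, 0 ≤ v ≤ d₂−1} and B = {k·d₁d₂² + w·d₁ : k ∈ ℕ, 0 ≤ w ≤ d₂−1}. Then A(x)B(x) − x is bounded as x → ∞: A(x) = d₁d₂ for large x and B(x) = x/(d₁d₂) + O(1). -/

import Mathlib

noncomputable def cnt (S : Set ℕ) (x : ℕ) : ℕ := (S ∩ Set.Iic x).ncard

private lemma key_inj {D u v u' v' : ℕ} (hu : u < D) (hu' : u' < D)
    (h : u + v * D = u' + v' * D) : u = u' ∧ v = v' := by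
  have hD : 0 < D := lt_of_le_of_lt (Nat.zero_le _) hu
  have h1 : (u + v * D) % D = u := by
    rw [Nat.add_mul_mod_self_right, Nat.mod_eq_of_lt hu]
  have h2 : (u' + v' * D) % D = u' := by
    rw [Nat.add_mul_mod_self_right, Nat.mod_eq_of_lt hu']
  have huu : u = u' := by rw [← h1, ← h2, h]
  refine ⟨huu, Nat.eq_of_mul_eq_mul_right hD ?_⟩
  omega

theorem stmt9 (d₁ d₂ : ℕ) (h₁ : 1 < d₁) (h₂ : 1 < d₂)
    (A : Set ℕ) (hA : A = {m | ∃ u v : ℕ, u ≤ d₁ - 1 ∧ v ≤ d₂ - 1 ∧ m = u + v * (d₁ * d₂)})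
    (B : Set ℕ) (hB : B = {m | ∃ k w : ℕ, w ≤ d₂ - 1 ∧ m = k * (d₁ * d₂ ^ 2) + w * d₁}) :
    (∃ N : ℕ, ∀ x ≥ N, cnt A x = d₁ * d₂) ∧
    (∃ C : ℤ, ∀ x : ℕ, |(d₁ * d₂ : ℤ) * (cnt B x : ℤ) - (x : ℤ)| ≤ C * (d₁ * d₂ : ℤ)) ∧
    (∃ C : ℤ, ∀ x : ℕ, |(cnt A x : ℤ) * (cnt B x : ℤ) - (x : ℤ)| ≤ C) := by
  have hd₁ : 0 < d₁ := by omega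
  have hd₂ : 0 < d₂ := by omega
  set D := d₁ * d₂ with hDdef
  have hD : 0 < D := Nat.mul_pos hd₁ hd₂
  have hd₁D : d₁ ≤ D := Nat.le_mul_of_pos_right d₁ hd₂
  set E := d₁ * d₂ ^ 2 with hEdef
  have hE : 0 < E := Nat.mul_pos hd₁ (pow_pos hd₂ 2)
  have hDE : d₂ * d₁ ≤ E := by
    have : d₂ * d₁ = d₁ * d₂ * 1 := by ring
    rw [this, hEdef]
    have : d₁ * d₂ ^ 2 = d₁ * d₂ * d₂ := by ring
    rw [this]
    exact Nat.mul_le_mul_left _ hd₂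
  -- Part 1 : A as finset
  set Afin : Finset ℕ :=
    (Finset.range d₁ ×ˢ Finset.range d₂).image (fun p => p.1 + p.2 * D) with hAfin
  have hAeq : A = ↑Afin := by
    ext m
    simp only [hA, Set.mem_setOf_eq, hAfin, Finset.coe_image, Set.mem_image,
      Finset.mem_coe, Finset.mem_product, Finset.mem_range]
    constructor
    · rintro ⟨u, v, hu, hv, rfl⟩
      exact ⟨(u, v), ⟨by omega, by omega⟩, rfl⟩
    · rintro ⟨⟨u, v⟩, ⟨hu, hv⟩, rfl⟩
      exact ⟨u, v, by omega, by omega, rfl⟩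
  have hAcard : Afin.card = D := by
    rw [hAfin, Finset.card_image_of_injOn, Finset.card_product,
      Finset.card_range, Finset.card_range]
    rintro ⟨u, v⟩ hp ⟨u', v'⟩ hq h
    simp only [Finset.mem_coe, Finset.mem_product, Finset.mem_range] at hp hq
    have hu : u < D := lt_of_lt_of_le hp.1 hd₁D
    have hu' : u' < D := lt_of_lt_of_le hq.1 hd₁D
    obtain ⟨h1, h2⟩ := key_inj hu hu' h
    exact Prod.ext h1 h2
  -- bound on elements of A
  set M : ℕ := (d₁ - 1) + (d₂ - 1) * D with hM
  have hAsub : ∀ x ≥ M, A ∩ Set.Iic x = A := by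
    intro x hx
    rw [Set.inter_eq_left]
    intro m hm
    rw [hA] at hm
    obtain ⟨u, v, hu, hv, rfl⟩ := hm
    have : u + v * D ≤ (d₁ - 1) + (d₂ - 1) * D :=
      Nat.add_le_add hu (Nat.mul_le_mul_right _ hv)
    exact Set.mem_Iic.2 (le_trans this hx)
  have part1 : ∀ x ≥ M, cnt A x = D := by
    intro x hx
    rw [cnt, hAsub x hx, hAeq, Set.ncard_coe_finset, hAcard]
  -- Part 2 : count of B up to x
  have hBcnt : ∀ x : ℕ, (x / E) * d₂ ≤ cnt B x ∧ cnt B x ≤ (x / E + 1) * d₂ := by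
    intro x
    set q := x / E with hq
    set Pfin : Finset (ℕ × ℕ) :=
      (Finset.range (q + 1) ×ˢ Finset.range d₂).filter
        (fun p => p.1 * E + p.2 * d₁ ≤ x) with hPfin
    set Bfin : Finset ℕ := Pfin.image (fun p => p.1 * E + p.2 * d₁) with hBfin
    have hBeq : B ∩ Set.Iic x = ↑Bfin := by
      ext m
      simp only [hB, Set.mem_inter_iff, Set.mem_setOf_eq, Set.mem_Iic, hBfin,
        Finset.coe_image, Set.mem_image, Finset.mem_coe, hPfin, Finset.mem_filter,
        Finset.mem_product, Finset.mem_range]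
      constructor
      · rintro ⟨⟨k, w, hw, rfl⟩, hm⟩
        have hkE : k * E ≤ x := le_trans (Nat.le_add_right _ _) hm
        have hk : k < q + 1 := Nat.lt_succ_of_le ((Nat.le_div_iff_mul_le hE).2 hkE)
        exact ⟨(k, w), ⟨⟨hk, by omega⟩, hm⟩, rfl⟩
      · rintro ⟨⟨k, w⟩, ⟨⟨hk, hw⟩, hm⟩, rfl⟩
        exact ⟨⟨k, w, by omega, rfl⟩, hm⟩
    have hinj : Set.InjOn (fun p : ℕ × ℕ => p.1 * E + p.2 * d₁) ↑Pfin := by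
      rintro ⟨k, w⟩ hp ⟨k', w'⟩ hq' h
      rw [Finset.mem_coe, hPfin, Finset.mem_filter, Finset.mem_product,
        Finset.mem_range, Finset.mem_range] at hp hq'
      have hw : w * d₁ < E := lt_of_lt_of_le ((Nat.mul_lt_mul_right hd₁).2 hp.1.2) hDE
      have hw' : w' * d₁ < E := lt_of_lt_of_le ((Nat.mul_lt_mul_right hd₁).2 hq'.1.2) hDE
      have h' : w * d₁ + k * E = w' * d₁ + k' * E := by
        have h2 : k * E + w * d₁ = k' * E + w' * d₁ := h
        omega
      obtain ⟨e1, e2⟩ := key_inj hw hw' h'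
      have : w = w' := Nat.eq_of_mul_eq_mul_right hd₁ e1
      simp [this, e2]
    have hcnt : cnt B x = Pfin.card := by
      rw [cnt, hBeq, Set.ncard_coe_finset, hBfin, Finset.card_image_of_injOn hinj]
    constructor
    · -- lower bound
      rw [hcnt]
      have hsub : Finset.range q ×ˢ Finset.range d₂ ⊆ Pfin := by
        rintro ⟨k, w⟩ hp
        simp only [Finset.mem_product, Finset.mem_range] at hp
        rw [hPfin, Finset.mem_filter, Finset.mem_product, Finset.mem_range,
          Finset.mem_range]
        refine ⟨⟨by omega, hp.2⟩, ?_⟩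
        show k * E + w * d₁ ≤ x
        have h1 : w * d₁ < E := lt_of_lt_of_le ((Nat.mul_lt_mul_right hd₁).2 hp.2) hDE
        have h2 : k * E + E ≤ q * E := by
          have : k + 1 ≤ q := hp.1
          calc k * E + E = (k + 1) * E := by ring
            _ ≤ q * E := Nat.mul_le_mul_right _ this
        have h3 : q * E ≤ x := Nat.div_mul_le_self x E
        omega
      calc q * d₂ = (Finset.range q ×ˢ Finset.range d₂).card := by
            rw [Finset.card_product, Finset.card_range, Finset.card_range]
        _ ≤ Pfin.card := Finset.card_le_card hsub
    · -- upper bound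
      rw [hcnt]
      calc Pfin.card ≤ (Finset.range (q + 1) ×ˢ Finset.range d₂).card :=
            Finset.card_le_card (Finset.filter_subset _ _)
        _ = (q + 1) * d₂ := by
            rw [Finset.card_product, Finset.card_range, Finset.card_range]
  -- integer bound for B
  have part2 : ∀ x : ℕ, |(D : ℤ) * (cnt B x : ℤ) - (x : ℤ)| ≤ (D : ℤ) * (D : ℤ) := by
    intro x
    obtain ⟨hlo, hhi⟩ := hBcnt x
    set q := x / E with hq
    have hED : E ≤ D * D := by
      rw [hEdef, hDdef]
      calc d₁ * d₂ ^ 2 = d₁ * (d₂ * d₂) := by ring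
        _ ≤ d₁ * (d₁ * (d₂ * d₂)) := Nat.le_mul_of_pos_left _ hd₁
        _ = d₁ * d₂ * (d₁ * d₂) := by ring
    have hDd : D * d₂ = E := by rw [hDdef, hEdef]; ring
    have hqx : q * E ≤ x := Nat.div_mul_le_self x E
    have hxq : x < (q + 1) * E := by
      have := Nat.lt_mul_div_succ x hE
      calc x < E * (x / E + 1) := this
        _ = (q + 1) * E := by rw [hq]; ring
    have hup : D * cnt B x ≤ x + D * D := by
      calc D * cnt B x ≤ D * ((q + 1) * d₂) := Nat.mul_le_mul_left _ hhi
        _ = (q + 1) * (D * d₂) := by ring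
        _ = (q + 1) * E := by rw [hDd]
        _ = q * E + E := by ring
        _ ≤ x + D * D := Nat.add_le_add hqx hED
    have hlow : x ≤ D * cnt B x + D * D := by
      have h1 : q * E ≤ D * cnt B x := by
        calc q * E = q * (D * d₂) := by rw [hDd]
          _ = D * (q * d₂) := by ring
          _ ≤ D * cnt B x := Nat.mul_le_mul_left _ hlo
      have h2 : x < q * E + E := by
        have h3 : (q + 1) * E = q * E + E := by ring
        omega
      have h4 : q * E ≤ D * cnt B x := h1
      omega
    have hupZ : (D : ℤ) * (cnt B x : ℤ) ≤ (x : ℤ) + (D : ℤ) * (D : ℤ) := by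
      exact_mod_cast hup
    have hlowZ : (x : ℤ) ≤ (D : ℤ) * (cnt B x : ℤ) + (D : ℤ) * (D : ℤ) := by
      exact_mod_cast hlow
    rw [abs_le]
    constructor <;> linarith
  refine ⟨⟨M, part1⟩, ⟨(D : ℤ), fun x => by
    calc |(d₁ * d₂ : ℤ) * (cnt B x : ℤ) - (x : ℤ)|
        = |(D : ℤ) * (cnt B x : ℤ) - (x : ℤ)| := by norm_cast
      _ ≤ (D : ℤ) * (D : ℤ) := part2 x
      _ = (D : ℤ) * (d₁ * d₂ : ℤ) := by rw [hDdef]; push_cast; ring⟩, ?_⟩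
  -- Part 3
  have hAfinite : A.Finite := by rw [hAeq]; exact Afin.finite_toSet
  have hcA_le : ∀ x : ℕ, cnt A x ≤ D := by
    intro x
    rw [cnt]
    calc (A ∩ Set.Iic x).ncard ≤ A.ncard :=
          Set.ncard_le_ncard Set.inter_subset_left hAfinite
      _ = D := by rw [hAeq, Set.ncard_coe_finset, hAcard]
  have hcB_mono : ∀ x ≤ M, cnt B x ≤ cnt B M := by
    intro x hx
    rw [cnt, cnt]
    refine Set.ncard_le_ncard ?_ ((Set.finite_Iic M).inter_of_right B)
    exact Set.inter_subset_inter_right B (Set.Iic_subset_Iic.2 hx)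
  refine ⟨(D : ℤ) * (D : ℤ) + (D : ℤ) * (cnt B M : ℤ) + (M : ℤ), fun x => ?_⟩
  rcases le_or_gt M x with hx | hx
  · rw [part1 x hx]
    have := part2 x
    have h1 : (0 : ℤ) ≤ (D : ℤ) * (cnt B M : ℤ) := by positivity
    have h2 : (0 : ℤ) ≤ (M : ℤ) := Int.ofNat_nonneg M
    linarith
  · have h1 : cnt A x * cnt B x ≤ D * cnt B M :=
      Nat.mul_le_mul (hcA_le x) (hcB_mono x (le_of_lt hx))
    have h1Z : (cnt A x : ℤ) * (cnt B x : ℤ) ≤ (D : ℤ) * (cnt B M : ℤ) := by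
      exact_mod_cast h1
    have h2 : (x : ℤ) ≤ (M : ℤ) := by exact_mod_cast le_of_lt hx
    have h3 : (0 : ℤ) ≤ (cnt A x : ℤ) * (cnt B x : ℤ) := by positivity
    have h4 : (0 : ℤ) ≤ (x : ℤ) := Int.ofNat_nonneg x
    have h5 : (0 : ℤ) ≤ (D : ℤ) * (D : ℤ) := by positivity
    rw [abs_le]
    constructor <;> linarith
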